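/- Fix d ≥ 1, T > 0, ρ ∈ 𝒰, and x, y ∈ ℝ^d. Let Z: [0,∞) → ℝ^d be absolutely continuous with Z_0 = x - y, and suppose ℓ_1,…,ℓ_d: [0,∞)→[0,∞) are non-decreasing with ℓ_j(0)=0, τ_1,…,τ_d ≥ 0, and κ > 0 are such that ‖Z_t‖₁ + κ Σ_j ℓ_j(t ∧ τ_j) ≤ ‖Z_0‖₁ + d ∫_0^t ρ(‖Z_s‖₁) ds for all t ≥ 0. Then for all t ≥ 0: (a) ‖Z_t‖₁ ≤ G_ρ^{-1}(G_ρ(‖Z_0‖₁) + dt), and (b) κ Σ_j ℓ_j(t ∧ τ_j) ≤ Γ_ρ(dt, ‖Z_0‖₁), where Γ_ρ(T,r) = r + Tρ(G_ρ^{-1}(G_ρ(r)+T)). -/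

import Mathlib

open Set MeasureTheory Filter

/-- `G_ρ(r) = ∫_1^r du/ρ(u)`. -/
noncomputable def Grho (ρ : ℝ → ℝ) (r : ℝ) : ℝ := ∫ u in (1:ℝ)..r, 1 / ρ u

/-- Generalized inverse of `G_ρ`, with the convention `G_ρ⁻¹(-∞) = 0`. -/
noncomputable def GrhoInv (ρ : ℝ → ℝ) (s : ℝ) : ℝ := sInf {r : ℝ | 0 < r ∧ s ≤ Grho ρ r}

/-- `Γ_ρ(T, r) = r + T ρ(G_ρ⁻¹(G_ρ(r) + T))`. -/
noncomputable def GamRho (ρ : ℝ → ℝ) (T r : ℝ) : ℝ := r + T * ρ (GrhoInv ρ (Grho ρ r + T))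

section Aux

variable {ρ : ℝ → ℝ}

lemma invRho_contOn (hρc : ContinuousOn ρ (Ioi 0)) (hρpos : ∀ r > 0, 0 < ρ r) :
    ContinuousOn (fun u => 1 / ρ u) (Ioi 0) :=
  continuousOn_const.div hρc (fun u hu => (hρpos u hu).ne')

lemma invRho_intInt (hρc : ContinuousOn ρ (Ioi 0)) (hρpos : ∀ r > 0, 0 < ρ r)
    {a b : ℝ} (ha : 0 < a) (hb : 0 < b) :
    IntervalIntegrable (fun u => 1 / ρ u) volume a b := by
  apply ContinuousOn.intervalIntegrable
  apply (invRho_contOn hρc hρpos).mono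
  intro x hx
  exact lt_of_lt_of_le (lt_min ha hb) hx.1

lemma Grho_hasDerivAt (hρc : ContinuousOn ρ (Ioi 0)) (hρpos : ∀ r > 0, 0 < ρ r)
    {b : ℝ} (hb : 0 < b) : HasDerivAt (Grho ρ) (1 / ρ b) b :=
  intervalIntegral.integral_hasDerivAt_right (invRho_intInt hρc hρpos one_pos hb)
    ((invRho_contOn hρc hρpos).stronglyMeasurableAtFilter isOpen_Ioi b hb)
    ((invRho_contOn hρc hρpos).continuousAt (isOpen_Ioi.mem_nhds hb))

lemma Grho_contOn (hρc : ContinuousOn ρ (Ioi 0)) (hρpos : ∀ r > 0, 0 < ρ r) :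
    ContinuousOn (Grho ρ) (Ioi 0) := fun b hb =>
  ((Grho_hasDerivAt hρc hρpos hb).continuousAt).continuousWithinAt

lemma Grho_strictMonoOn (hρc : ContinuousOn ρ (Ioi 0)) (hρpos : ∀ r > 0, 0 < ρ r) :
    StrictMonoOn (Grho ρ) (Ioi 0) := by
  apply strictMonoOn_of_deriv_pos (convex_Ioi 0) (Grho_contOn hρc hρpos)
  intro x hx
  rw [interior_Ioi] at hx
  rw [(Grho_hasDerivAt hρc hρpos hx).deriv]
  exact div_pos one_pos (hρpos x hx)

lemma Grho_exists_ge (hρc : ContinuousOn ρ (Ioi 0)) (hρpos : ∀ r > 0, 0 < ρ r)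
    (hρlin : ∃ C > 0, ∀ r > 0, ρ r ≤ C * (1 + r)) (s : ℝ) :
    ∃ r, 0 < r ∧ s ≤ Grho ρ r := by
  obtain ⟨C, hC, hlin⟩ := hρlin
  set r : ℝ := max 1 (Real.exp (C * s + Real.log 2)) with hr
  have hr1 : (1:ℝ) ≤ r := le_max_left _ _
  have hrpos : 0 < r := lt_of_lt_of_le one_pos hr1
  refine ⟨r, hrpos, ?_⟩
  have step1 : (∫ u in (1:ℝ)..r, (C * (1 + u))⁻¹) ≤ Grho ρ r := by
    apply intervalIntegral.integral_mono_on hr1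
    · apply ContinuousOn.intervalIntegrable
      apply ContinuousOn.inv₀
      · fun_prop
      · intro x hx
        rw [uIcc_of_le hr1] at hx
        have : (0:ℝ) < 1 + x := by nlinarith [hx.1]
        positivity
    · exact invRho_intInt hρc hρpos one_pos hrpos
    · intro x hx
      have hx0 : 0 < x := lt_of_lt_of_le one_pos hx.1
      rw [one_div]
      apply inv_anti₀ (hρpos x hx0) (hlin x hx0)
  have step2 : (∫ u in (1:ℝ)..r, (C * (1 + u))⁻¹) = C⁻¹ * Real.log ((1 + r) / 2) := by
    have h1 : (∫ u in (1:ℝ)..r, (C * (1 + u))⁻¹) = C⁻¹ * ∫ u in (1:ℝ)..r, (1 + u)⁻¹ := by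
      rw [← intervalIntegral.integral_const_mul]
      congr 1; ext u; rw [mul_inv]
    have h2 : (∫ u in (1:ℝ)..r, (1 + u)⁻¹) = ∫ u in (2:ℝ)..(1 + r), u⁻¹ := by
      rw [intervalIntegral.integral_comp_add_left (fun u => u⁻¹) 1]
      norm_num
    have h3 : (∫ u in (2:ℝ)..(1 + r), u⁻¹) = Real.log ((1 + r) / 2) := by
      apply integral_inv
      intro h
      rw [uIcc_of_le (by linarith)] at h
      linarith [h.1]
    rw [h1, h2, h3]
  have step3 : s ≤ C⁻¹ * Real.log ((1 + r) / 2) := by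
    have hre : Real.exp (C * s + Real.log 2) ≤ r := le_max_right _ _
    have h1r : Real.exp (C * s + Real.log 2) ≤ 1 + r := by linarith
    have hlog : C * s + Real.log 2 ≤ Real.log (1 + r) := by
      rw [← Real.log_exp (C * s + Real.log 2)]
      exact Real.log_le_log (Real.exp_pos _) h1r
    have : Real.log ((1 + r) / 2) = Real.log (1 + r) - Real.log 2 := by
      rw [Real.log_div (by linarith) (by norm_num)]
    rw [this]
    rw [← sub_nonneg]
    have : C⁻¹ * (Real.log (1 + r) - Real.log 2) - s
        = C⁻¹ * ((Real.log (1 + r) - Real.log 2) - C * s) := by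
      field_simp
    rw [this]
    apply mul_nonneg (by positivity)
    linarith
  linarith

lemma GrhoInv_nonneg (s : ℝ) : 0 ≤ GrhoInv ρ s :=
  Real.sInf_nonneg fun _ hx => hx.1.le

lemma GrhoInv_mono (hρc : ContinuousOn ρ (Ioi 0)) (hρpos : ∀ r > 0, 0 < ρ r)
    (hρlin : ∃ C > 0, ∀ r > 0, ρ r ≤ C * (1 + r)) {s s' : ℝ} (h : s ≤ s') :
    GrhoInv ρ s ≤ GrhoInv ρ s' := by
  apply csInf_le_csInf
  · exact ⟨0, fun r hr => hr.1.le⟩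
  · exact Grho_exists_ge hρc hρpos hρlin s'
  · exact fun r hr => ⟨hr.1, h.trans hr.2⟩

end Aux

/-- The coupling a priori bound: from
`‖Z_t‖₁ + κ Σ_j ℓ_j(t ∧ τ_j) ≤ ‖Z_0‖₁ + d∫_0^t ρ(‖Z_s‖₁) ds` one deduces
(a) `‖Z_t‖₁ ≤ G_ρ⁻¹(G_ρ(‖Z_0‖₁) + dt)` and (b) `κ Σ_j ℓ_j(t ∧ τ_j) ≤ Γ_ρ(dt, ‖Z_0‖₁)`. -/
theorem coupling_apriori_bound (d : ℕ) (hd : 0 < d) (ρ : ℝ → ℝ)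
    (hρc : ContinuousOn ρ (Ioi 0))
    (hρpos : ∀ r > 0, 0 < ρ r)
    (hρnonneg : ∀ r ≥ 0, 0 ≤ ρ r)
    (hρmono : MonotoneOn ρ (Ici 0))
    (hρlin : ∃ C > 0, ∀ r > 0, ρ r ≤ C * (1 + r))
    (hOsgood : Tendsto (fun ε => ∫ u in ε..(1:ℝ), 1 / ρ u) (nhdsWithin 0 (Ioi 0)) atTop)
    (T : ℝ) (hT : 0 < T) (x y : Fin d → ℝ)
    (Z : ℝ → Fin d → ℝ) (hZ0 : Z 0 = x - y)
    (hZac : ∃ g : ℝ → Fin d → ℝ,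
      (∀ j, ∀ a b : ℝ, IntervalIntegrable (fun s => g s j) volume a b) ∧
      ∀ t ≥ (0:ℝ), ∀ j, Z t j = Z 0 j + ∫ s in (0:ℝ)..t, g s j)
    (ℓ : Fin d → ℝ → ℝ)
    (hℓmono : ∀ j, MonotoneOn (ℓ j) (Ici 0))
    (hℓ0 : ∀ j, ℓ j 0 = 0) (hℓnonneg : ∀ j, ∀ t ≥ (0:ℝ), 0 ≤ ℓ j t)
    (τ : Fin d → ℝ) (hτ : ∀ j, 0 ≤ τ j)
    (κ : ℝ) (hκ : 0 < κ)
    (hkey : ∀ t ≥ (0:ℝ),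
      (∑ j, |Z t j|) + κ * (∑ j, ℓ j (min t (τ j))) ≤
        (∑ j, |Z 0 j|) + (d : ℝ) * ∫ s in (0:ℝ)..t, ρ (∑ j, |Z s j|)) :
    ∀ t ≥ (0:ℝ),
      (∑ j, |Z t j|) ≤ GrhoInv ρ (Grho ρ (∑ j, |Z 0 j|) + (d : ℝ) * t) ∧
      κ * (∑ j, ℓ j (min t (τ j))) ≤ GamRho ρ ((d : ℝ) * t) (∑ j, |Z 0 j|) := by
  obtain ⟨g, hgint, hg⟩ := hZac
  -- the continuous version of the ℓ¹ norm of Z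
  set N : ℝ → ℝ := fun t => ∑ j, |Z 0 j + ∫ s in (0:ℝ)..t, g s j| with hN
  have hNcont : Continuous N := by
    apply continuous_finset_sum
    intro j _
    exact (continuous_const.add (intervalIntegral.continuous_primitive (hgint j) 0)).abs
  have hNeq : ∀ t ≥ (0:ℝ), N t = ∑ j, |Z t j| :=
    fun t ht => Finset.sum_congr rfl fun j _ => by rw [hg t ht j]
  have hNnonneg : ∀ t, 0 ≤ N t := fun t => Finset.sum_nonneg fun j _ => abs_nonneg _
  set c : ℝ := ∑ j, |Z 0 j| with hc
  have hc0 : 0 ≤ c := Finset.sum_nonneg fun j _ => abs_nonneg _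
  have hN0 : N 0 = c := by
    simp only [hN, intervalIntegral.integral_same, add_zero]
    exact hc.symm
  have hdpos : (0:ℝ) < (d:ℝ) := by exact_mod_cast hd
  -- measurability / integrability of ρ ∘ N
  have hρ'mono : Monotone (fun x => ρ (max x 0)) := by
    intro a b hab
    exact hρmono (le_max_right a 0) (le_max_right b 0) (max_le_max hab le_rfl)
  have hρ'eq : ∀ s, ρ (max (N s) 0) = ρ (N s) := fun s => by rw [max_eq_left (hNnonneg s)]
  have hint : ∀ t : ℝ, 0 ≤ t → IntervalIntegrable (fun s => ρ (N s)) volume 0 t := by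
    intro t ht
    obtain ⟨s₀, hs₀, hmax⟩ := isCompact_Icc.exists_isMaxOn (nonempty_Icc.2 ht)
      hNcont.continuousOn
    rw [intervalIntegrable_iff_integrableOn_Ioc_of_le ht]
    have hmeas : Measurable fun s => ρ (N s) := by
      have : (fun s => ρ (N s)) = fun s => ρ (max (N s) 0) :=
        funext fun s => (hρ'eq s).symm
      rw [this]
      exact hρ'mono.measurable.comp hNcont.measurable
    apply Integrable.mono' (g := fun _ => ρ (max (N s₀) 0))
      (integrableOn_const measure_Ioc_lt_top.ne)
      hmeas.aestronglyMeasurable.restrict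
    apply (ae_restrict_iff' measurableSet_Ioc).2
    apply Filter.Eventually.of_forall
    intro s hs
    rw [Real.norm_eq_abs, abs_of_nonneg (hρnonneg _ (hNnonneg s)), ← hρ'eq s]
    exact hρ'mono (hmax ⟨hs.1.le, hs.2⟩)
  -- key inequality in terms of N
  have hkey' : ∀ t ≥ (0:ℝ), N t + κ * (∑ j, ℓ j (min t (τ j))) ≤
      c + (d:ℝ) * ∫ s in (0:ℝ)..t, ρ (N s) := by
    intro t ht
    have h1 := hkey t ht
    have h2 : (∫ s in (0:ℝ)..t, ρ (∑ j, |Z s j|)) = ∫ s in (0:ℝ)..t, ρ (N s) := by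
      apply intervalIntegral.integral_congr
      intro s hs
      rw [uIcc_of_le ht] at hs
      exact congrArg ρ (hNeq s hs.1).symm
    rw [hNeq t ht, ← h2]
    exact h1
  have hℓsum : ∀ t ≥ (0:ℝ), 0 ≤ κ * (∑ j, ℓ j (min t (τ j))) := by
    intro t ht
    exact mul_nonneg hκ.le (Finset.sum_nonneg fun j _ =>
      hℓnonneg j _ (le_min ht (hτ j)))
  -- the core Bihari estimate with regularization parameter ε
  have core : ∀ ε > (0:ℝ), ∀ t ≥ (0:ℝ),
      N t ≤ c + ε + (d:ℝ) * ∫ s in (0:ℝ)..t, ρ (max (N s) ε) ∧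
      0 < c + ε + (d:ℝ) * ∫ s in (0:ℝ)..t, ρ (max (N s) ε) ∧
      Grho ρ (c + ε + (d:ℝ) * ∫ s in (0:ℝ)..t, ρ (max (N s) ε)) ≤
        Grho ρ (c + ε) + (d:ℝ) * t := by
    intro ε hε t ht
    set h' : ℝ → ℝ := fun s => ρ (max (N s) ε) with hh'
    have hmaxpos : ∀ s, 0 < max (N s) ε := fun s => lt_max_of_lt_right hε
    have hhcont : Continuous h' := by
      have h1 : Continuous fun s => max (N s) ε := hNcont.max continuous_const
      refine continuous_iff_continuousAt.2 fun s => ?_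
      have h2 : ContinuousAt (ρ ∘ fun u => max (N u) ε) s :=
        ContinuousAt.comp (hρc.continuousAt (isOpen_Ioi.mem_nhds (hmaxpos s)))
          h1.continuousAt
      exact h2
    have hhnonneg : ∀ s, 0 ≤ h' s := fun s => (hρpos _ (hmaxpos s)).le
    set φ : ℝ → ℝ := fun u => c + ε + (d:ℝ) * ∫ s in (0:ℝ)..u, h' s with hφ
    have hφderiv : ∀ u, HasDerivAt φ ((d:ℝ) * h' u) u := by
      intro u
      apply HasDerivAt.const_add
      exact (intervalIntegral.integral_hasDerivAt_right (hhcont.intervalIntegrable 0 u)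
        (hhcont.stronglyMeasurableAtFilter volume (nhds u)) hhcont.continuousAt).const_mul (d:ℝ)
    have hφ0 : φ 0 = c + ε := by simp [hφ]
    have hφlb : ∀ u ≥ (0:ℝ), c + ε ≤ φ u := by
      intro u hu
      have h0 : 0 ≤ ∫ s in (0:ℝ)..u, h' s :=
        intervalIntegral.integral_nonneg hu (fun s _ => hhnonneg s)
      have := mul_nonneg hdpos.le h0
      simp only [hφ]; linarith
    have hφpos : ∀ u ≥ (0:ℝ), 0 < φ u := fun u hu =>
      lt_of_lt_of_le (by linarith) (hφlb u hu)
    have hNle : ∀ u ≥ (0:ℝ), N u ≤ φ u := by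
      intro u hu
      have h1 := hkey' u hu
      have h3 : (∫ s in (0:ℝ)..u, ρ (N s)) ≤ ∫ s in (0:ℝ)..u, h' s := by
        apply intervalIntegral.integral_mono_on hu (hint u hu) (hhcont.intervalIntegrable 0 u)
        intro s _
        exact hρmono (hNnonneg s) (hmaxpos s).le (le_max_left _ _)
      have h4 := mul_le_mul_of_nonneg_left h3 hdpos.le
      have h5 := hℓsum u hu
      simp only [hφ]; linarith
    have hφmem : ∀ u ≥ (0:ℝ), h' u ≤ ρ (φ u) := by
      intro u hu
      apply hρmono (hmaxpos u).le (hφpos u hu).le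
      exact max_le (hNle u hu) (le_trans (by linarith) (hφlb u hu))
    set ψ : ℝ → ℝ := fun u => Grho ρ (φ u) - (d:ℝ) * u with hψ
    have hψderiv : ∀ u ≥ (0:ℝ),
        HasDerivAt ψ ((1 / ρ (φ u)) * ((d:ℝ) * h' u) - (d:ℝ)) u := by
      intro u hu
      have h1 : HasDerivAt (fun v => Grho ρ (φ v)) ((1 / ρ (φ u)) * ((d:ℝ) * h' u)) u :=
        (Grho_hasDerivAt hρc hρpos (hφpos u hu)).comp u (hφderiv u)
      have h2 : HasDerivAt (fun v => (d:ℝ) * v) (d:ℝ) u := by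
        simpa using (hasDerivAt_id u).const_mul (d:ℝ)
      exact h1.sub h2
    have hanti : AntitoneOn ψ (Ici 0) := by
      apply antitoneOn_of_deriv_nonpos (convex_Ici 0)
      · exact fun u hu => ((hψderiv u hu).continuousAt).continuousWithinAt
      · intro u hu
        rw [interior_Ici] at hu
        exact ((hψderiv u hu.le).differentiableAt).differentiableWithinAt
      · intro u hu
        rw [interior_Ici] at hu
        rw [(hψderiv u hu.le).deriv]
        have hp : 0 < ρ (φ u) := hρpos _ (hφpos u hu.le)
        have h1 : (d:ℝ) * h' u ≤ (d:ℝ) * ρ (φ u) :=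
          mul_le_mul_of_nonneg_left (hφmem u hu.le) hdpos.le
        have h2 : (1 / ρ (φ u)) * ((d:ℝ) * h' u) ≤ (1 / ρ (φ u)) * ((d:ℝ) * ρ (φ u)) :=
          mul_le_mul_of_nonneg_left h1 (by positivity)
        have h3 : (1 / ρ (φ u)) * ((d:ℝ) * ρ (φ u)) = (d:ℝ) := by
          field_simp
        linarith
    have hψle := hanti (self_mem_Ici) ht ht
    simp only [hψ, hφ0] at hψle
    refine ⟨hNle t ht, hφpos t ht, by linarith⟩
  -- part (a)
  have partA : ∀ t ≥ (0:ℝ), N t ≤ GrhoInv ρ (Grho ρ c + (d:ℝ) * t) := by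
    intro t ht
    apply le_csInf (Grho_exists_ge hρc hρpos hρlin _)
    rintro r' ⟨hr', hGr'⟩
    apply le_of_forall_pos_le_add
    intro η hη
    have hr'η : Grho ρ r' < Grho ρ (r' + η) :=
      Grho_strictMonoOn hρc hρpos (mem_Ioi.2 hr') (mem_Ioi.2 (by linarith))
        (lt_add_of_pos_right r' hη)
    obtain ⟨ε, hε, hεle⟩ : ∃ ε > (0:ℝ), Grho ρ (c + ε) + (d:ℝ) * t ≤ Grho ρ (r' + η) := by
      rcases eq_or_lt_of_le hc0 with hcz | hcz
      · -- c = 0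
        have htend : Tendsto (fun ε => Grho ρ (c + ε)) (nhdsWithin 0 (Ioi 0)) atBot := by
          have heq : (fun ε => Grho ρ (c + ε)) = fun ε => -∫ u in ε..(1:ℝ), 1 / ρ u := by
            funext ε
            rw [← hcz, zero_add, Grho, intervalIntegral.integral_symm]
          rw [heq]
          exact tendsto_neg_atTop_atBot.comp hOsgood
        have := (htend.eventually (eventually_le_atBot
          (Grho ρ (r' + η) - (d:ℝ) * t))).and self_mem_nhdsWithin
        obtain ⟨ε, h1, h2⟩ := this.exists
        exact ⟨ε, h2, by linarith⟩
      · -- c > 0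
        have hcont : ContinuousAt (Grho ρ) c := (Grho_hasDerivAt hρc hρpos hcz).continuousAt
        have htend : Tendsto (fun ε => Grho ρ (c + ε)) (nhdsWithin 0 (Ioi 0))
            (nhds (Grho ρ c)) := by
          have h1 : Tendsto (fun ε : ℝ => c + ε) (nhdsWithin 0 (Ioi 0)) (nhds c) := by
            have h0 := ((tendsto_id : Tendsto id (nhds (0:ℝ)) (nhds 0)).const_add
              c).mono_left (nhdsWithin_le_nhds (s := Ioi (0:ℝ)))
            simpa using h0
          exact hcont.tendsto.comp h1
        have hlt : Grho ρ c < Grho ρ (r' + η) - (d:ℝ) * t := by linarith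
        have := (htend.eventually_lt_const hlt).and self_mem_nhdsWithin
        obtain ⟨ε, h1, h2⟩ := this.exists
        exact ⟨ε, h2, by linarith⟩
    obtain ⟨hNφ, hφpos, hGφ⟩ := core ε hε t ht
    have hφle : c + ε + (d:ℝ) * (∫ s in (0:ℝ)..t, ρ (max (N s) ε)) ≤ r' + η := by
      by_contra hlt
      push_neg at hlt
      have := Grho_strictMonoOn hρc hρpos (show r' + η ∈ Ioi (0:ℝ) by simp; linarith)
        (show _ ∈ Ioi (0:ℝ) from hφpos) hlt
      linarith
    linarith
  -- conclusion
  intro t ht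
  constructor
  · rw [← hNeq t ht]
    exact partA t ht
  · set K : ℝ := GrhoInv ρ (Grho ρ c + (d:ℝ) * t) with hK
    have hK0 : 0 ≤ K := GrhoInv_nonneg _
    have hNK : ∀ s ∈ Icc (0:ℝ) t, N s ≤ K := by
      intro s hs
      refine (partA s hs.1).trans ?_
      apply GrhoInv_mono hρc hρpos hρlin
      have := mul_le_mul_of_nonneg_left hs.2 hdpos.le
      linarith
    have h1 := hkey' t ht
    have h3 : (∫ s in (0:ℝ)..t, ρ (N s)) ≤ ∫ s in (0:ℝ)..t, ρ K := by
      apply intervalIntegral.integral_mono_on ht (hint t ht) intervalIntegrable_const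
      intro s hs
      exact hρmono (hNnonneg s) hK0 (hNK s hs)
    have h4 : (∫ s in (0:ℝ)..t, ρ K) = t * ρ K := by
      simp [intervalIntegral.integral_const, smul_eq_mul]
    rw [h4] at h3
    have h5 := mul_le_mul_of_nonneg_left h3 hdpos.le
    have h6 := hNnonneg t
    show κ * (∑ j, ℓ j (min t (τ j))) ≤ c + ((d:ℝ) * t) * ρ (GrhoInv ρ (Grho ρ c + (d:ℝ) * t))
    rw [← hK]
    nlinarith
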